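/- Let G = Γ(𝔽_p[x]/(x^{2b})), b ≥ 1. Then 0 is an eigenvalue of the adjacency matrix A(G) with multiplicity at least ∑_{i=1}^{b−1}((p−1)p^{2b−1−i} − 1), and −1 is an eigenvalue with multiplicity at least ∑_{i=b}^{2b−1}((p−1)p^{2b−1−i} − 1). -/

import Mathlib

open Polynomial

noncomputable section

/-- The truncated polynomial ring `𝔽_p[x]/(x^c)`. -/
abbrev TPR (p c : ℕ) : Type := AdjoinRoot (X ^ c : (ZMod p)[X])

instance (p c : ℕ) [Fact p.Prime] : Finite (TPR p c) := by
  have hb : PowerBasis (ZMod p) (TPR p c) :=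
    AdjoinRoot.powerBasis (pow_ne_zero c Polynomial.X_ne_zero)
  have : Module.Finite (ZMod p) (TPR p c) := Module.Finite.of_basis hb.basis
  exact Module.finite_of_finite (ZMod p)

/-- The canonical representative (the unique representative of degree `< c`)
of an element of `𝔽_p[x]/(x^c)`. -/
def canon {p c : ℕ} (f : TPR p c) : (ZMod p)[X] :=
  Function.surjInv (AdjoinRoot.mk_surjective (g := (X ^ c : (ZMod p)[X]))) f %ₘ X ^ c

/-- The minimal degree: the least exponent with nonzero coefficient in the
canonical representative. -/
def mindeg {p c : ℕ} (f : TPR p c) : ℕ := (canon f).natTrailingDegree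

/-- The set of nonzero zero-divisors of `𝔽_p[x]/(x^c)`. -/
def zd (p c : ℕ) : Set (TPR p c) := {f | f ≠ 0 ∧ ∃ g, g ≠ 0 ∧ f * g = 0}

/-- The zero-divisor graph of `𝔽_p[x]/(x^c)`: vertices are the nonzero
zero-divisors, and `f ~ g` iff `f ≠ g` and `f * g = 0`. -/
def zdGraph (p c : ℕ) : SimpleGraph (zd p c) where
  Adj a b := a ≠ b ∧ (a : TPR p c) * (b : TPR p c) = 0
  symm := ⟨fun a b h => ⟨h.1.symm, by rw [mul_comm]; exact h.2⟩⟩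
  loopless := ⟨fun a h => h.1 rfl⟩

noncomputable instance (p c : ℕ) [Fact p.Prime] : Fintype (zd p c) := Fintype.ofFinite _

open scoped Classical in
/-- The adjacency matrix of the zero-divisor graph, over `ℝ`. -/
def adjM (p c : ℕ) : Matrix (zd p c) (zd p c) ℝ :=
  Matrix.of fun a b => if (zdGraph p c).Adj a b then 1 else 0

open scoped Classical in
/-- The diagonal degree matrix of the zero-divisor graph, over `ℝ`. -/
def degM (p c : ℕ) : Matrix (zd p c) (zd p c) ℝ :=
  Matrix.diagonal fun v => (((zdGraph p c).neighborSet v).ncard : ℝ)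


variable {p c : ℕ} [Fact p.Prime]

lemma mk_canon (f : TPR p c) : AdjoinRoot.mk _ (canon f) = f := by
  unfold canon
  have h1 : AdjoinRoot.mk (X ^ c : (ZMod p)[X])
      (Function.surjInv (AdjoinRoot.mk_surjective (g := (X ^ c : (ZMod p)[X]))) f) = f :=
    Function.surjInv_eq _ f
  rw [modByMonic_eq_sub_mul_div _ (X ^ c), map_sub, map_mul, AdjoinRoot.mk_self,
    zero_mul, sub_zero, h1]

lemma canon_degree_lt (f : TPR p c) : (canon f).degree < (c : WithBot ℕ) := by
  have := degree_modByMonic_lt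
    (Function.surjInv (AdjoinRoot.mk_surjective (g := (X ^ c : (ZMod p)[X]))) f)
    (monic_X_pow (R := ZMod p) c)
  rwa [degree_X_pow] at this

lemma mk_inj {q r : (ZMod p)[X]} (hq : q.degree < (c : WithBot ℕ))
    (hr : r.degree < (c : WithBot ℕ))
    (h : AdjoinRoot.mk (X ^ c : (ZMod p)[X]) q = AdjoinRoot.mk _ r) : q = r := by
  have hd : (X ^ c : (ZMod p)[X]) ∣ q - r := AdjoinRoot.mk_eq_mk.mp h
  have : q - r = 0 := by
    apply eq_zero_of_dvd_of_degree_lt hd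
    rw [degree_X_pow]
    exact lt_of_le_of_lt (degree_sub_le q r) (max_lt hq hr)
  exact sub_eq_zero.mp this

lemma canon_mk {q : (ZMod p)[X]} (hq : q.degree < (c : WithBot ℕ)) :
    canon (AdjoinRoot.mk (X ^ c : (ZMod p)[X]) q) = q :=
  mk_inj (canon_degree_lt _) hq (by rw [mk_canon])

lemma canon_zero : canon (0 : TPR p c) = 0 := by
  have : ((0:(ZMod p)[X]).degree) < (c : WithBot ℕ) := by
    simp [degree_zero]
  simpa using canon_mk (q := (0 : (ZMod p)[X])) this

lemma canon_ne_zero {f : TPR p c} (hf : f ≠ 0) : canon f ≠ 0 := by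
  intro h
  apply hf
  have := mk_canon f
  rw [h, map_zero] at this
  exact this.symm

lemma mindeg_lt {f : TPR p c} (hf : f ≠ 0) : mindeg f < c := by
  have h0 : canon f ≠ 0 := canon_ne_zero hf
  have h1 : (canon f).natDegree < c :=
    natDegree_lt_iff_degree_lt h0 |>.mpr (by simpa using canon_degree_lt f)
  exact lt_of_le_of_lt (natTrailingDegree_le_natDegree _) h1

lemma X_pow_dvd_iff_le {q : (ZMod p)[X]} (hq : q ≠ 0) {n : ℕ} :
    X ^ n ∣ q ↔ n ≤ q.natTrailingDegree := by
  rw [X_pow_dvd_iff]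
  constructor
  · intro h
    exact le_natTrailingDegree hq h
  · intro h d hd
    exact coeff_eq_zero_of_lt_natTrailingDegree (lt_of_lt_of_le hd h)

lemma mul_eq_zero_iff_tpr {f g : TPR p c} (hf : f ≠ 0) (hg : g ≠ 0) :
    f * g = 0 ↔ c ≤ mindeg f + mindeg g := by
  have hcf : canon f ≠ 0 := canon_ne_zero hf
  have hcg : canon g ≠ 0 := canon_ne_zero hg
  have h1 : f * g = AdjoinRoot.mk _ (canon f * canon g) := by
    rw [map_mul, mk_canon, mk_canon]
  rw [h1, AdjoinRoot.mk_eq_zero, X_pow_dvd_iff_le (mul_ne_zero hcf hcg),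
    natTrailingDegree_mul hcf hcg]
  rfl

lemma mindeg_mk_X_pow {i : ℕ} (hi : i < c) :
    mindeg (AdjoinRoot.mk (X ^ c : (ZMod p)[X]) (X ^ i)) = i := by
  unfold mindeg
  rw [canon_mk (by rw [degree_X_pow]; exact_mod_cast hi), natTrailingDegree_X_pow]

lemma mk_X_pow_ne_zero {i : ℕ} (hi : i < c) :
    (AdjoinRoot.mk (X ^ c : (ZMod p)[X]) (X ^ i)) ≠ 0 := by
  intro h
  have := canon_mk (p := p) (q := (X ^ i : (ZMod p)[X]))
    (by rw [degree_X_pow]; exact_mod_cast hi)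
  rw [h, canon_zero] at this
  exact pow_ne_zero i (X_ne_zero (R := ZMod p)) this.symm

lemma mem_zd_iff (hc : 1 ≤ c) {f : TPR p c} :
    f ∈ zd p c ↔ f ≠ 0 ∧ 1 ≤ mindeg f := by
  constructor
  · rintro ⟨hf, g, hg, hfg⟩
    refine ⟨hf, ?_⟩
    have h1 := (mul_eq_zero_iff_tpr hf hg).mp hfg
    have h2 := mindeg_lt hg
    omega
  · rintro ⟨hf, h1⟩
    refine ⟨hf, AdjoinRoot.mk _ (X ^ (c - 1)), mk_X_pow_ne_zero (by omega), ?_⟩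
    rw [mul_eq_zero_iff_tpr hf (mk_X_pow_ne_zero (by omega)), mindeg_mk_X_pow (by omega)]
    omega

/-- The polynomial `X^i * (C u + ∑ monomial (j+1) (q j))`. -/
def cpoly (p : ℕ) (i n : ℕ) (u : ZMod p) (q : Fin n → ZMod p) : (ZMod p)[X] :=
  X ^ i * (C u + ∑ j : Fin n, monomial ((j : ℕ) + 1) (q j))

lemma cpoly_r_coeff_zero (n : ℕ) (u : ZMod p) (q : Fin n → ZMod p) :
    (C u + ∑ j : Fin n, monomial ((j : ℕ) + 1) (q j)).coeff 0 = u := by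
  rw [coeff_add, coeff_C, finset_sum_coeff]
  simp [coeff_monomial]

lemma cpoly_r_coeff_succ (n : ℕ) (u : ZMod p) (q : Fin n → ZMod p) (j0 : Fin n) :
    (C u + ∑ j : Fin n, monomial ((j : ℕ) + 1) (q j)).coeff ((j0 : ℕ) + 1) = q j0 := by
  rw [coeff_add, coeff_C, finset_sum_coeff]
  simp only [coeff_monomial]
  rw [Finset.sum_eq_single j0]
  · simp
  · intro b _ hb
    have : (b : ℕ) + 1 ≠ (j0 : ℕ) + 1 := by
      simpa [Fin.val_injective.eq_iff] using fun h => hb (Fin.ext h)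
    simp [this]
    exact fun h => absurd (Fin.ext h) hb
  · simp

lemma cpoly_r_ne_zero (n : ℕ) (u : (ZMod p)ˣ) (q : Fin n → ZMod p) :
    (C (u : ZMod p) + ∑ j : Fin n, monomial ((j : ℕ) + 1) (q j)) ≠ 0 := by
  intro h
  have := cpoly_r_coeff_zero (p := p) n u q
  rw [h] at this
  simp at this
  exact u.ne_zero this.symm

lemma cpoly_natDegree_le (i n : ℕ) (u : ZMod p) (q : Fin n → ZMod p) :
    (cpoly p i n u q).natDegree ≤ i + n := by
  unfold cpoly
  refine le_trans (natDegree_mul_le) ?_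
  have h1 : (X ^ i : (ZMod p)[X]).natDegree ≤ i := natDegree_X_pow_le i
  have h2 : (C u + ∑ j : Fin n, monomial ((j : ℕ) + 1) (q j)).natDegree ≤ n := by
    refine le_trans (natDegree_add_le _ _) (max_le (by simp) ?_)
    refine natDegree_sum_le_of_forall_le _ _ fun j _ => ?_
    exact le_trans (natDegree_monomial_le _) (by omega)
  omega

lemma cpoly_degree_lt (hc : 1 ≤ c) (i n : ℕ) (hin : i + n ≤ c - 1) (u : ZMod p)
    (q : Fin n → ZMod p) : (cpoly p i n u q).degree < (c : WithBot ℕ) := by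
  refine lt_of_le_of_lt (degree_le_natDegree) ?_
  have h := cpoly_natDegree_le (p := p) i n u q
  have : (cpoly p i n u q).natDegree < c := by omega
  exact_mod_cast this

lemma cpoly_mindeg (hc : 1 ≤ c) {i n : ℕ} (hin : i + n ≤ c - 1) (u : (ZMod p)ˣ)
    (q : Fin n → ZMod p) :
    mindeg (AdjoinRoot.mk (X ^ c : (ZMod p)[X]) (cpoly p i n (u : ZMod p) q)) = i := by
  unfold mindeg
  rw [canon_mk (cpoly_degree_lt hc i n hin _ q)]
  unfold cpoly
  rw [natTrailingDegree_mul (pow_ne_zero i X_ne_zero) (cpoly_r_ne_zero n u q),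
    natTrailingDegree_X_pow]
  have : (C (u : ZMod p) + ∑ j : Fin n, monomial ((j : ℕ) + 1) (q j)).natTrailingDegree = 0 := by
    rw [natTrailingDegree_eq_zero]
    right
    rw [cpoly_r_coeff_zero]
    exact u.ne_zero
  omega

lemma cpoly_mk_ne_zero (hc : 1 ≤ c) {i n : ℕ} (hin : i + n ≤ c - 1) (u : (ZMod p)ˣ)
    (q : Fin n → ZMod p) :
    (AdjoinRoot.mk (X ^ c : (ZMod p)[X]) (cpoly p i n (u : ZMod p) q)) ≠ 0 := by
  intro h
  have := canon_mk (p := p) (cpoly_degree_lt hc i n hin (u : ZMod p) q)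
  rw [h, canon_zero] at this
  exact mul_ne_zero (pow_ne_zero i X_ne_zero) (cpoly_r_ne_zero n u q) this.symm

lemma cpoly_inj (hc : 1 ≤ c) {i n : ℕ} (hin : i + n ≤ c - 1) :
    Function.Injective (fun x : (ZMod p)ˣ × (Fin n → ZMod p) =>
      AdjoinRoot.mk (X ^ c : (ZMod p)[X]) (cpoly p i n (x.1 : ZMod p) x.2)) := by
  rintro ⟨u, q⟩ ⟨u', q'⟩ h
  have h2 : cpoly p i n (u : ZMod p) q = cpoly p i n (u' : ZMod p) q' :=
    mk_inj (cpoly_degree_lt hc i n hin _ _) (cpoly_degree_lt hc i n hin _ _) h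
  unfold cpoly at h2
  have h3 := mul_left_cancel₀ (pow_ne_zero i (X_ne_zero (R := ZMod p))) h2
  have hu : (u : ZMod p) = (u' : ZMod p) := by
    have := congrArg (fun r => r.coeff 0) h3
    simpa [cpoly_r_coeff_zero n] using this
  have hq : q = q' := by
    funext j0
    have := congrArg (fun r => r.coeff ((j0 : ℕ) + 1)) h3
    simpa [cpoly_r_coeff_succ n] using this
  simp [Prod.ext_iff, Units.ext_iff, hu, hq]

open scoped Classical

lemma card_class (hc : 1 ≤ c) {i : ℕ} (hi : 1 ≤ i) (hic : i < c) :
    (p - 1) * p ^ (c - 1 - i) ≤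
      (Finset.univ.filter (fun w : ↥(zd p c) => mindeg (w : TPR p c) = i)).card := by
  set n := c - 1 - i with hn
  have hin : i + n ≤ c - 1 := by omega
  set S := Finset.univ.filter (fun w : ↥(zd p c) => mindeg (w : TPR p c) = i) with hS
  have hmem : ∀ x : (ZMod p)ˣ × (Fin n → ZMod p),
      AdjoinRoot.mk (X ^ c : (ZMod p)[X]) (cpoly p i n (x.1 : ZMod p) x.2) ∈ zd p c := by
    intro x
    rw [mem_zd_iff hc]
    exact ⟨cpoly_mk_ne_zero hc hin x.1 x.2, by rw [cpoly_mindeg hc hin]; omega⟩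
  have hmemS : ∀ x : (ZMod p)ˣ × (Fin n → ZMod p),
      (⟨AdjoinRoot.mk (X ^ c : (ZMod p)[X]) (cpoly p i n (x.1 : ZMod p) x.2), hmem x⟩ :
        ↥(zd p c)) ∈ S := by
    intro x
    rw [hS, Finset.mem_filter]
    exact ⟨Finset.mem_univ _, cpoly_mindeg hc hin x.1 x.2⟩
  have hinj : Function.Injective (fun x : (ZMod p)ˣ × (Fin n → ZMod p) =>
      (⟨⟨AdjoinRoot.mk (X ^ c : (ZMod p)[X]) (cpoly p i n (x.1 : ZMod p) x.2), hmem x⟩,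
        hmemS x⟩ : {w : ↥(zd p c) // w ∈ S})) := by
    intro x y hxy
    exact cpoly_inj hc hin (congrArg (fun z => ((z : {w : ↥(zd p c) // w ∈ S}) : ↥(zd p c)).1) hxy)
  have hcard := Fintype.card_le_of_injective _ hinj
  rw [Fintype.card_coe] at hcard
  refine le_trans (le_of_eq ?_) hcard
  rw [Fintype.card_prod, ZMod.card_units, Fintype.card_fun, ZMod.card, Fintype.card_fin]

lemma mindeg_pos (hc : 1 ≤ c) (a : ↥(zd p c)) : 1 ≤ mindeg (a : TPR p c) :=
  ((mem_zd_iff hc).mp a.2).2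

lemma mindeg_lt' (hc : 1 ≤ c) (a : ↥(zd p c)) : mindeg (a : TPR p c) < c :=
  mindeg_lt ((mem_zd_iff hc).mp a.2).1

lemma adjM_apply (hc : 1 ≤ c) (a b : ↥(zd p c)) :
    adjM p c a b = if (a ≠ b ∧ c ≤ mindeg (a : TPR p c) + mindeg (b : TPR p c)) then 1 else 0 := by
  have ha := ((mem_zd_iff hc).mp a.2).1
  have hb := ((mem_zd_iff hc).mp b.2).1
  unfold adjM
  simp only [Matrix.of_apply]
  congr 1
  simp only [eq_iff_iff]
  constructor
  · rintro ⟨h1, h2⟩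
    exact ⟨h1, (mul_eq_zero_iff_tpr ha hb).mp h2⟩
  · rintro ⟨h1, h2⟩
    exact ⟨h1, (mul_eq_zero_iff_tpr ha hb).mpr h2⟩

lemma eig_lower (hc : 2 ≤ c) (lo hi : ℕ) (hlo : 1 ≤ lo) (hhi : hi ≤ c - 1) (μ : ℝ)
    (hvec : ∀ w r : ↥(zd p c), mindeg (w : TPR p c) = mindeg (r : TPR p c) →
      mindeg (w : TPR p c) ∈ Finset.Icc lo hi → w ≠ r →
      (adjM p c).mulVecLin (Pi.single w 1 - Pi.single r 1) =
        μ • (Pi.single w 1 - Pi.single r 1)) :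
    (∑ i ∈ Finset.Icc lo hi, ((p - 1) * p ^ (c - 1 - i) - 1)) ≤
      Module.finrank ℝ (Module.End.eigenspace ((adjM p c).mulVecLin) μ) := by
  have hc1 : 1 ≤ c := by omega
  -- representatives
  have hrepex : ∀ i : ℕ, ∃ v : ↥(zd p c), 1 ≤ i → i < c → mindeg (v : TPR p c) = i := by
    intro i
    by_cases h : 1 ≤ i ∧ i < c
    · refine ⟨⟨AdjoinRoot.mk _ (X ^ i), (mem_zd_iff hc1).mpr
        ⟨mk_X_pow_ne_zero h.2, by rw [mindeg_mk_X_pow h.2]; omega⟩⟩, fun _ _ => ?_⟩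
      exact mindeg_mk_X_pow h.2
    · refine ⟨⟨AdjoinRoot.mk _ (X ^ 1), (mem_zd_iff hc1).mpr
        ⟨mk_X_pow_ne_zero (by omega), by rw [mindeg_mk_X_pow (by omega)]⟩⟩,
        fun h1 h2 => absurd ⟨h1, h2⟩ h⟩
  choose rep hrep using hrepex
  set S : ℕ → Finset ↥(zd p c) :=
    fun i => Finset.univ.filter (fun w : ↥(zd p c) => mindeg (w : TPR p c) = i) with hSdef
  have hmemS : ∀ (i : ℕ) (w : ↥(zd p c)), w ∈ S i ↔ mindeg (w : TPR p c) = i := by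
    intro i w
    simp [hSdef]
  set T : Finset ↥(zd p c) := (Finset.Icc lo hi).biUnion (fun i => (S i).erase (rep i)) with hTdef
  -- cardinality of T
  have hTcard : (∑ i ∈ Finset.Icc lo hi, ((p - 1) * p ^ (c - 1 - i) - 1)) ≤ T.card := by
    rw [hTdef, Finset.card_biUnion]
    · refine Finset.sum_le_sum fun i hi' => ?_
      rw [Finset.mem_Icc] at hi'
      have h1 : rep i ∈ S i := (hmemS i _).mpr (hrep i (by omega) (by omega))
      rw [Finset.card_erase_of_mem h1]
      have h2 : (p - 1) * p ^ (c - 1 - i) ≤ (S i).card :=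
        card_class (p := p) hc1 (i := i) (by omega) (by omega)
      omega
    · intro i _ j _ hij
      rw [Function.onFun, Finset.disjoint_left]
      intro w hw1 hw2
      have e1 := (hmemS i w).mp (Finset.mem_of_mem_erase hw1)
      have e2 := (hmemS j w).mp (Finset.mem_of_mem_erase hw2)
      exact hij (e1 ▸ e2 ▸ rfl)
  -- membership facts
  have hTm : ∀ w : ↥(zd p c), w ∈ T → mindeg (w : TPR p c) ∈ Finset.Icc lo hi ∧
      w ≠ rep (mindeg (w : TPR p c)) := by
    intro w hw
    rw [hTdef, Finset.mem_biUnion] at hw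
    obtain ⟨i, hi', hw⟩ := hw
    obtain ⟨hne, hwS⟩ := Finset.mem_erase.mp hw
    have := (hmemS i w).mp hwS
    rw [this]
    exact ⟨hi', hne⟩
  -- the eigenvectors
  set v : ↥T → (↥(zd p c) → ℝ) := fun w =>
    Pi.single (w : ↥(zd p c)) 1 - Pi.single (rep (mindeg ((w : ↥(zd p c)) : TPR p c))) 1 with hvdef
  have hmind : ∀ w : ↥T, mindeg ((rep (mindeg ((w : ↥(zd p c)) : TPR p c))) : TPR p c) =
      mindeg ((w : ↥(zd p c)) : TPR p c) := by
    intro w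
    have h1 := (hTm w.1 w.2).1
    rw [Finset.mem_Icc] at h1
    exact hrep _ (by omega) (by omega)
  have hmemE : ∀ w : ↥T, v w ∈ Module.End.eigenspace ((adjM p c).mulVecLin) μ := by
    intro w
    rw [Module.End.mem_eigenspace_iff]
    exact hvec w.1 (rep (mindeg ((w : ↥(zd p c)) : TPR p c))) (hmind w).symm
      (hTm w.1 w.2).1 (hTm w.1 w.2).2
  -- linear independence
  have hli : LinearIndependent ℝ v := by
    rw [Fintype.linearIndependent_iff]
    intro g hsum w0
    have h0 := congrFun hsum (w0 : ↥(zd p c))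
    rw [Finset.sum_apply] at h0
    have hterm : ∀ w : ↥T, (g w • v w) (w0 : ↥(zd p c)) = if w = w0 then g w else 0 := by
      intro w
      have hrepne : rep (mindeg ((w : ↥(zd p c)) : TPR p c)) ≠ (w0 : ↥(zd p c)) := by
        intro h
        have h1 := hmind w
        rw [h] at h1
        have h2 := (hTm w0.1 w0.2).2
        rw [h1] at h2
        exact h2 h.symm
      rw [hvdef]
      simp only [Pi.smul_apply, Pi.sub_apply, smul_eq_mul]
      rw [Pi.single_apply, Pi.single_apply]
      by_cases hww : w = w0
      · subst hww
        rw [if_pos rfl, if_neg (Ne.symm hrepne), if_pos rfl]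
        ring
      · have : (w0 : ↥(zd p c)) ≠ (w : ↥(zd p c)) := by
          intro h
          exact hww (Subtype.ext h.symm)
        rw [if_neg this, if_neg (Ne.symm hrepne), if_neg hww]
        ring
    rw [Finset.sum_congr rfl (fun w _ => hterm w), Finset.sum_ite_eq' Finset.univ w0 g] at h0
    simpa using h0
  -- conclude
  set v' : ↥T → ↥(Module.End.eigenspace ((adjM p c).mulVecLin) μ) :=
    fun w => ⟨v w, hmemE w⟩ with hv'def
  have hli' : LinearIndependent ℝ v' := by
    have : v = (Module.End.eigenspace ((adjM p c).mulVecLin) μ).subtype ∘ v' := rfl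
    rw [this] at hli
    exact hli.of_comp _
  have := hli'.fintype_card_le_finrank
  rw [Fintype.card_coe] at this
  omega

/-- For `G = Γ(𝔽_p[x]/(x^(2b)))`, `0` is an adjacency eigenvalue with multiplicity
at least `∑_{i=1}^{b-1} ((p-1)p^{2b-1-i} - 1)` and `-1` is an adjacency eigenvalue
with multiplicity at least `∑_{i=b}^{2b-1} ((p-1)p^{2b-1-i} - 1)`. -/
theorem stmt_15 (p b : ℕ) [Fact p.Prime] (hb : 1 ≤ b) :
    (∑ i ∈ Finset.Icc 1 (b - 1), ((p - 1) * p ^ (2 * b - 1 - i) - 1)) ≤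
      Module.finrank ℝ
        (Module.End.eigenspace ((adjM p (2 * b)).mulVecLin) (0 : ℝ)) ∧
    (∑ i ∈ Finset.Icc b (2 * b - 1), ((p - 1) * p ^ (2 * b - 1 - i) - 1)) ≤
      Module.finrank ℝ
        (Module.End.eigenspace ((adjM p (2 * b)).mulVecLin) (-1 : ℝ)) := by
  have hc2 : 2 ≤ 2 * b := by omega
  have hc1 : 1 ≤ 2 * b := by omega
  constructor
  · refine eig_lower hc2 1 (b - 1) le_rfl (by omega) 0 ?_
    intro w r hwr hmem hne
    rw [Finset.mem_Icc] at hmem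
    have hw1 := mindeg_pos hc1 w
    have hint : ∀ u : ↥(zd p (2 * b)), adjM p (2 * b) u w = adjM p (2 * b) u r := by
      intro u
      rw [adjM_apply hc1, adjM_apply hc1]
      congr 1
      simp only [eq_iff_iff]
      constructor
      · rintro ⟨-, h2⟩
        refine ⟨fun he => ?_, by omega⟩
        rw [he] at h2
        rw [← hwr] at h2
        omega
      · rintro ⟨-, h2⟩
        refine ⟨fun he => ?_, by omega⟩
        rw [he, ← hwr] at h2
        omega
    have hz : (adjM p (2 * b)).mulVecLin (Pi.single w 1 - Pi.single r 1) = 0 := by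
      rw [map_sub]
      funext u
      simp only [Matrix.mulVecLin_apply, Matrix.mulVec_single_one, Matrix.col_apply, Pi.sub_apply, mul_one,
        Pi.zero_apply]
      rw [hint u]
      ring
    rw [hz, zero_smul]
  · refine eig_lower hc2 b (2 * b - 1) (by omega) (by omega) (-1) ?_
    intro w r hwr hmem hne
    rw [Finset.mem_Icc] at hmem
    rw [map_sub]
    funext u
    simp only [Matrix.mulVecLin_apply, Matrix.mulVec_single_one, Matrix.col_apply, Pi.sub_apply, Pi.smul_apply,
      smul_eq_mul, mul_one]
    rw [adjM_apply hc1, adjM_apply hc1, Pi.single_apply, Pi.single_apply]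
    by_cases h1 : u = w
    · subst h1
      rw [if_neg (fun h => h.1 rfl), if_pos ⟨hne, by omega⟩, if_pos rfl, if_neg hne]
      norm_num
    · by_cases h2 : u = r
      · subst h2
        rw [if_pos ⟨h1, by omega⟩, if_neg (fun h => h.1 rfl), if_neg h1, if_pos rfl]
        norm_num
      · rw [if_neg h1, if_neg h2]
        by_cases h3 : 2 * b ≤ mindeg (u : TPR p (2 * b)) + mindeg (w : TPR p (2 * b))
        · rw [if_pos ⟨h1, h3⟩, if_pos ⟨h2, by omega⟩]
          norm_num
        · rw [if_neg (fun h => h3 h.2), if_neg (fun h => h3 (by omega))]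
          norm_num
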